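/- For all N ∈ ℕ, σ > 0, T > 0, the uniform error satisfies sup{|E_{N,σ}(t,τ)| : -T ≤ t,τ ≤ T} ≤ Σ_{n=N}^{∞} e^{-λ} λⁿ/n!, where λ = T²/σ². -/

import Mathlib

open Finset

lemma exp_tsum' (x : ℝ) : Real.exp x = ∑' n : ℕ, x ^ n / n.factorial := by
  rw [Real.exp_eq_exp_ℝ, NormedSpace.exp_eq_tsum_div]

lemma tail_eq' (N : ℕ) (s : ℝ) :
    ∑' k : ℕ, s ^ (N + k) / (N + k).factorial
      = Real.exp s - ∑ n ∈ range N, s ^ n / n.factorial := by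
  have h := Summable.sum_add_tsum_nat_add (f := fun n => s ^ n / n.factorial) N
    (Real.summable_pow_div_factorial s)
  rw [← exp_tsum'] at h
  have h2 : ∑' k : ℕ, s ^ (N + k) / (N + k).factorial
      = ∑' k : ℕ, s ^ (k + N) / (k + N).factorial := by
    congr 1; ext k; rw [Nat.add_comm]
  rw [h2]; linarith

lemma sum_hasDerivAt' (M : ℕ) (s : ℝ) :
    HasDerivAt (fun x : ℝ => ∑ n ∈ range (M + 1), x ^ n / n.factorial)
      (∑ n ∈ range M, s ^ n / n.factorial) s := by
  have h1 : HasDerivAt (fun x : ℝ => ∑ n ∈ range (M + 1), x ^ n / n.factorial)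
      (∑ n ∈ range (M + 1), (n : ℝ) * s ^ (n - 1) / n.factorial) s := by
    apply HasDerivAt.fun_sum
    intro n _
    simpa using (hasDerivAt_pow n s).div_const (n.factorial : ℝ)
  convert h1 using 1
  rw [Finset.sum_range_succ']
  simp only [Nat.cast_zero, zero_mul, Nat.factorial_zero, Nat.cast_one, zero_div, add_zero,
    Nat.add_sub_cancel]
  apply Finset.sum_congr rfl
  intro k _
  rw [Nat.factorial_succ]
  have hk : ((k + 1 : ℕ) : ℝ) ≠ 0 := by positivity
  push_cast
  field_simp

lemma F_antitone' (N : ℕ) :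
    AntitoneOn (fun s : ℝ => Real.exp (-s) * ∑ n ∈ range N, s ^ n / n.factorial)
      (Set.Ici (0 : ℝ)) := by
  cases N with
  | zero => simp only [range_zero, Finset.sum_empty, mul_zero]; exact fun a _ b _ _ => le_refl 0
  | succ M =>
    have hF : ∀ s : ℝ, HasDerivAt
        (fun x : ℝ => Real.exp (-x) * ∑ n ∈ range (M + 1), x ^ n / n.factorial)
        (-(Real.exp (-s) * s ^ M / M.factorial)) s := by
      intro s
      have he : HasDerivAt (fun x : ℝ => Real.exp (-x)) (-Real.exp (-s)) s := by
        simpa using (hasDerivAt_neg s).exp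
      have h := he.fun_mul (sum_hasDerivAt' M s)
      refine h.congr_deriv ?_
      rw [Finset.sum_range_succ]
      ring
    apply antitoneOn_of_deriv_nonpos (convex_Ici 0)
    · exact fun s _ => ((hF s).continuousAt).continuousWithinAt
    · exact fun s _ => (hF s).differentiableAt.differentiableWithinAt
    · intro s hs
      rw [interior_Ici] at hs
      rw [(hF s).deriv]
      have hs0 : (0:ℝ) < s := hs
      have : (0:ℝ) ≤ Real.exp (-s) * s ^ M / M.factorial :=
        div_nonneg (mul_nonneg (Real.exp_pos _).le (pow_nonneg hs0.le M)) (by positivity)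
      linarith

lemma tail_summable' (N : ℕ) (s : ℝ) :
    Summable (fun k : ℕ => s ^ (N + k) / (N + k).factorial) :=
  (Real.summable_pow_div_factorial s).comp_injective (add_right_injective N)

theorem uniform_error_poisson_tail_bound (σ : ℝ) (hσ : 0 < σ) (N : ℕ) (T : ℝ) (hT : 0 < T)
    (t τ : ℝ) (ht : -T ≤ t) (ht' : t ≤ T) (hτ : -T ≤ τ) (hτ' : τ ≤ T) :
    |Real.exp (-(t - τ)^2 / (2 * σ^2)) -
        Real.exp (-(t^2 + τ^2) / (2 * σ^2)) *
          ∑ n ∈ Finset.range N, (1 / n.factorial : ℝ) * (τ * t / σ^2)^n| ≤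
      ∑' n : ℕ, Real.exp (-(T^2 / σ^2)) * (T^2 / σ^2)^(N + n) / (N + n).factorial := by
  have hσ2 : (0:ℝ) < σ ^ 2 := by positivity
  set x : ℝ := τ * t / σ ^ 2 with hxdef
  set lam : ℝ := T ^ 2 / σ ^ 2 with hlamdef
  have htabs : |t| ≤ T := abs_le.mpr ⟨ht, ht'⟩
  have hτabs : |τ| ≤ T := abs_le.mpr ⟨hτ, hτ'⟩
  have habs2 : |τ * t| ≤ (t ^ 2 + τ ^ 2) / 2 := by
    rw [abs_mul]
    nlinarith [sq_nonneg (|τ| - |t|), sq_abs τ, sq_abs t]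
  have hxa : |x| ≤ (t ^ 2 + τ ^ 2) / (2 * σ ^ 2) := by
    rw [hxdef, abs_div, abs_of_pos hσ2]
    calc |τ * t| / σ ^ 2 ≤ ((t ^ 2 + τ ^ 2) / 2) / σ ^ 2 := by gcongr
      _ = (t ^ 2 + τ ^ 2) / (2 * σ ^ 2) := by ring
  have hxlam : |x| ≤ lam := by
    rw [hxdef, hlamdef, abs_div, abs_of_pos hσ2]
    gcongr
    calc |τ * t| = |τ| * |t| := abs_mul τ t
      _ ≤ T * T := mul_le_mul hτabs htabs (abs_nonneg t) hT.le
      _ = T ^ 2 := by ring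
  have hS : (∑ n ∈ Finset.range N, (1 / n.factorial : ℝ) * x ^ n)
      = ∑ n ∈ range N, x ^ n / n.factorial :=
    Finset.sum_congr rfl fun n _ => by ring
  have h1 : Real.exp (-(t - τ) ^ 2 / (2 * σ ^ 2))
      = Real.exp (-(t ^ 2 + τ ^ 2) / (2 * σ ^ 2)) * Real.exp x := by
    rw [← Real.exp_add]
    congr 1
    rw [hxdef]
    field_simp
    ring
  have habsfun : ∀ k : ℕ, |x ^ (N + k) / ((N + k).factorial : ℝ)|
      = |x| ^ (N + k) / (N + k).factorial := fun k => by
    rw [abs_div, abs_pow, Nat.abs_cast]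
  calc |Real.exp (-(t - τ) ^ 2 / (2 * σ ^ 2)) -
        Real.exp (-(t ^ 2 + τ ^ 2) / (2 * σ ^ 2)) *
          ∑ n ∈ Finset.range N, (1 / n.factorial : ℝ) * x ^ n|
      = Real.exp (-(t ^ 2 + τ ^ 2) / (2 * σ ^ 2)) *
          |Real.exp x - ∑ n ∈ range N, x ^ n / n.factorial| := by
        rw [h1, hS, ← mul_sub, abs_mul, abs_of_pos (Real.exp_pos _)]
    _ = Real.exp (-(t ^ 2 + τ ^ 2) / (2 * σ ^ 2)) *
          |∑' k : ℕ, x ^ (N + k) / (N + k).factorial| := by rw [tail_eq']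
    _ ≤ Real.exp (-(t ^ 2 + τ ^ 2) / (2 * σ ^ 2)) *
          ∑' k : ℕ, |x| ^ (N + k) / (N + k).factorial := by
        apply mul_le_mul_of_nonneg_left ?_ (Real.exp_pos _).le
        have hsum : Summable (fun k : ℕ => ‖x ^ (N + k) / ((N + k).factorial : ℝ)‖) := by
          simpa only [Real.norm_eq_abs, habsfun] using tail_summable' N |x|
        calc |∑' k : ℕ, x ^ (N + k) / ((N + k).factorial : ℝ)|
            ≤ ∑' k : ℕ, ‖x ^ (N + k) / ((N + k).factorial : ℝ)‖ :=
              norm_tsum_le_tsum_norm hsum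
          _ = ∑' k : ℕ, |x| ^ (N + k) / (N + k).factorial := by
              simp only [Real.norm_eq_abs, habsfun]
    _ ≤ Real.exp (-|x|) * ∑' k : ℕ, |x| ^ (N + k) / (N + k).factorial := by
        apply mul_le_mul_of_nonneg_right
        · apply Real.exp_le_exp.mpr
          rw [neg_div]
          linarith
        · exact tsum_nonneg fun k => by positivity
    _ = 1 - Real.exp (-|x|) * ∑ n ∈ range N, |x| ^ n / n.factorial := by
        rw [tail_eq', mul_sub, ← Real.exp_add, neg_add_cancel, Real.exp_zero]
    _ ≤ 1 - Real.exp (-lam) * ∑ n ∈ range N, lam ^ n / n.factorial := by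
        have := F_antitone' N (Set.mem_Ici.mpr (abs_nonneg x))
          (Set.mem_Ici.mpr ((abs_nonneg x).trans hxlam)) hxlam
        simp only at this
        linarith
    _ = Real.exp (-lam) * ∑' k : ℕ, lam ^ (N + k) / (N + k).factorial := by
        rw [tail_eq', mul_sub, ← Real.exp_add, neg_add_cancel, Real.exp_zero]
    _ = ∑' n : ℕ, Real.exp (-lam) * lam ^ (N + n) / (N + n).factorial := by
        rw [← tsum_mul_left]
        congr 1
        ext k
        ring
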